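/- For each k ≥ 0, the number of pairs (p, t) where p is a nonnegative Dyck path of length 2k from height 0 to height 0 and t is a single box of the Young diagram of the partition lying above p (inside the staircase triangle), equals the coefficient of x^{2k} in c(c−1)²/(2−c)³ where c = c(x²) is the Catalan generating function. Equivalently, Σ_{π: π_i ≤ k−i} |π| equals [x^{2k}] c(c−1)²/(2−c)³. -/

import Mathlib

/-- `c(x²)` as a one-variable formal power series over `ℚ`, where
`c(t) = Σ_k C_k t^k` is the Catalan generating function. -/
noncomputable def catalanX2 : PowerSeries ℚ :=
  PowerSeries.mk fun k =>
    if k % 2 = 0 then (Nat.choose k (k / 2) : ℚ) / (k / 2 + 1) else 0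

/-- The total number of boxes `Σ_π |π|` over all partitions `π` with at most `k`
parts contained in the staircase `π_i ≤ k − i` (equivalently, the number of pairs
(nonnegative Dyck path of length `2k`, one box of the partition above it), i.e. of
1-rook placements). -/
noncomputable def stairBoxCount (k : ℕ) : ℚ :=
  ∑ᶠ π : {π : Fin k → ℕ //
      (∀ i j, i ≤ j → π j ≤ π i) ∧ ∀ i : Fin k, π i ≤ k - ((i : ℕ) + 1)},
    ((∑ i, (π : Fin k → ℕ) i : ℕ) : ℚ)


namespace StairAux

open Finset PowerSeries

noncomputable def stairSet (k : ℕ) : Finset (Fin k → ℕ) :=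
  (Fintype.piFinset fun _ : Fin k => Finset.range (k+1)).filter
    (fun π => (∀ i j, i ≤ j → π j ≤ π i) ∧ ∀ i : Fin k, π i ≤ k - ((i : ℕ) + 1))


lemma mem_stairSet {k : ℕ} {π : Fin k → ℕ} :
    π ∈ stairSet k ↔
      ((∀ i j, i ≤ j → π j ≤ π i) ∧ ∀ i : Fin k, π i ≤ k - ((i : ℕ) + 1)) := by
  constructor
  · intro h; exact (Finset.mem_filter.1 h).2
  · intro h
    refine Finset.mem_filter.2 ⟨?_, h⟩
    refine Fintype.mem_piFinset.2 fun i => ?_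
    have h1 := h.2 i
    have h2 : π i ≤ k := le_trans h1 (Nat.sub_le _ _)
    simpa [Finset.mem_range] using Nat.lt_succ_of_le h2

noncomputable def cnt (k : ℕ) : ℕ := (stairSet k).card
noncomputable def ar (k : ℕ) : ℕ := ∑ π ∈ stairSet k, ∑ i, π i

def glue (n d : ℕ) (α : Fin d → ℕ) (β : Fin (n - d) → ℕ) (m : ℕ) : ℕ :=
  if h : m < d then α ⟨m, h⟩ + (n - d)
  else if m = d then n - d
  else if h3 : m - (d+1) < n - d then β ⟨m - (d+1), h3⟩ else 0

def glueF (n d : ℕ) (α : Fin d → ℕ) (β : Fin (n - d) → ℕ) : Fin (n+1) → ℕ :=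
  fun i => glue n d α β i.val

lemma glue_lt {n d : ℕ} (α : Fin d → ℕ) (β : Fin (n - d) → ℕ) {m : ℕ} (h : m < d) :
    glue n d α β m = α ⟨m, h⟩ + (n - d) := by simp [glue, h]

lemma glue_eq {n d : ℕ} (α : Fin d → ℕ) (β : Fin (n - d) → ℕ) (h : ¬ d < d := by omega) :
    glue n d α β d = n - d := by simp [glue]

lemma glue_gt {n d : ℕ} (α : Fin d → ℕ) (β : Fin (n - d) → ℕ) {m : ℕ}
    (h : d < m) (h2 : m - (d+1) < n - d) :
    glue n d α β m = β ⟨m - (d+1), h2⟩ := by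
  have h1 : ¬ m < d := by omega
  have h0 : ¬ m = d := by omega
  simp [glue, h1, h0, h2]

/-- membership: glueF lands in stairSet (n+1). -/
lemma glueF_mem {n d : ℕ} (hd : d ≤ n) {α : Fin d → ℕ} {β : Fin (n - d) → ℕ}
    (hα : α ∈ stairSet d) (hβ : β ∈ stairSet (n - d)) :
    glueF n d α β ∈ stairSet (n+1) := by
  obtain ⟨hαm, hαb⟩ := mem_stairSet.1 hα
  obtain ⟨hβm, hβb⟩ := mem_stairSet.1 hβ
  refine mem_stairSet.2 ⟨?_, ?_⟩
  · intro i j hij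
    have hij' : (i:ℕ) ≤ (j:ℕ) := hij
    show glue n d α β ↑j ≤ glue n d α β ↑i
    rcases lt_trichotomy (j : ℕ) d with hj | hj | hj
    · have hi : (i : ℕ) < d := lt_of_le_of_lt hij' hj
      rw [glue_lt α β hi, glue_lt α β hj]
      have := hαm ⟨i, hi⟩ ⟨j, hj⟩ hij'
      omega
    · rcases lt_or_eq_of_le (hj ▸ hij' : (i:ℕ) ≤ d) with hi | hi
      · rw [glue_lt α β hi, hj, glue_eq α β]; omega
      · rw [hj, hi]
    · have hj2 : (j:ℕ) - (d+1) < n - d := by have := j.isLt; omega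
      rw [glue_gt α β hj hj2]
      have hb := hβb ⟨(j:ℕ) - (d+1), hj2⟩
      simp only at hb
      rcases lt_trichotomy (i : ℕ) d with hi | hi | hi
      · rw [glue_lt α β hi]; omega
      · rw [hi, glue_eq α β]; omega
      · have hi2 : (i:ℕ) - (d+1) < n - d := by have := i.isLt; omega
        rw [glue_gt α β hi hi2]
        exact hβm ⟨(i:ℕ) - (d+1), hi2⟩ ⟨(j:ℕ) - (d+1), hj2⟩ (by simp only [Fin.mk_le_mk]; omega)
  · intro i
    show glue n d α β ↑i ≤ n + 1 - (↑i + 1)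
    rcases lt_trichotomy (i : ℕ) d with hi | hi | hi
    · rw [glue_lt α β hi]
      have := hαb ⟨i, hi⟩
      simp at this
      omega
    · rw [hi, glue_eq α β]
      omega
    · have hi2 : (i:ℕ) - (d+1) < n - d := by have := i.isLt; omega
      rw [glue_gt α β hi hi2]
      have := hβb ⟨(i:ℕ) - (d+1), hi2⟩
      simp at this
      omega


/-- Covering: every staircase partition in `stairSet (n+1)` is a glue. -/
lemma exists_glue {n : ℕ} {π : Fin (n+1) → ℕ} (hπ : π ∈ stairSet (n+1)) :
    ∃ d, d ≤ n ∧ ∃ α ∈ stairSet d, ∃ β ∈ stairSet (n - d), π = glueF n d α β := by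
  obtain ⟨hm, hb⟩ := mem_stairSet.1 hπ
  set S : Finset (Fin (n+1)) := univ.filter (fun i => π i = n - (i : ℕ)) with hS
  have hSne : S.Nonempty := by
    refine ⟨Fin.last n, ?_⟩
    have := hb (Fin.last n)
    simp only [hS, Finset.mem_filter, Finset.mem_univ, true_and, Fin.val_last] at this ⊢
    omega
  set dF : Fin (n+1) := S.min' hSne with hdF
  set d : ℕ := (dF : ℕ) with hd
  have hdn : d ≤ n := by have := dF.isLt; omega
  have hπd : π dF = n - d := by
    have := S.min'_mem hSne
    simp only [hS, Finset.mem_filter, Finset.mem_univ, true_and] at this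
    exact this
  have hmin : ∀ i : Fin (n+1), (i : ℕ) < d → π i ≠ n - (i : ℕ) := by
    intro i hi hcon
    have : dF ≤ i := S.min'_le i (by simp [hS, hcon])
    have : (dF : ℕ) ≤ (i : ℕ) := this
    omega
  refine ⟨d, hdn, fun i => π ⟨i, by omega⟩ - (n - d), ?_, fun j => π ⟨d+1+(j:ℕ), by have := j.isLt; omega⟩, ?_, ?_⟩
  · refine mem_stairSet.2 ⟨?_, ?_⟩
    · intro i j hij
      have h1 := hm (⟨i, by omega⟩ : Fin (n+1)) ⟨j, by omega⟩ (by exact_mod_cast (hij : (i:ℕ) ≤ (j:ℕ)))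
      omega
    · intro i
      have hlt : (i : ℕ) < d := i.isLt
      have h1 := hb (⟨i, by omega⟩ : Fin (n+1))
      have h2 := hmin ⟨i, by omega⟩ hlt
      simp only at h1 h2
      omega
  · refine mem_stairSet.2 ⟨?_, ?_⟩
    · intro i j hij
      exact hm ⟨d+1+(i:ℕ), by have := i.isLt; omega⟩ ⟨d+1+(j:ℕ), by have := j.isLt; omega⟩
        (by simp only [Fin.mk_le_mk]; exact Nat.add_le_add_left (by exact_mod_cast hij) _)
    · intro j
      have h1 := hb ⟨d+1+(j:ℕ), by have := j.isLt; omega⟩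
      simp only at h1
      have := j.isLt
      omega
  · funext i
    show π i = glue n d _ _ (i : ℕ)
    rcases lt_trichotomy ((i : ℕ)) d with hi | hi | hi
    · rw [glue_lt _ _ hi]
      have hge : n - d ≤ π i := by
        have h1 := hm i dF (by exact_mod_cast Nat.le_of_lt hi)
        omega
      have : (⟨(i:ℕ), by omega⟩ : Fin (n+1)) = i := by apply Fin.ext; simp
      rw [this]
      omega
    · have : i = dF := by apply Fin.ext; simpa using hi
      rw [this]; exact hπd.trans (glue_eq _ _).symm
    · have hi2 : (i:ℕ) - (d+1) < n - d := by have := i.isLt; omega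
      rw [glue_gt _ _ hi hi2]
      congr 1
      apply Fin.ext
      simp
      omega

lemma glueF_inj {n d : ℕ} (hd : d ≤ n) {α α' : Fin d → ℕ} {β β' : Fin (n-d) → ℕ}
    (h : glueF n d α β = glueF n d α' β') : α = α' ∧ β = β' := by
  constructor
  · funext i
    have := congrFun h ⟨(i:ℕ), by have := i.isLt; omega⟩
    show _ = _
    rw [glueF, glueF] at this
    simp only at this
    rw [glue_lt α β i.isLt, glue_lt α' β' i.isLt] at this
    simpa [Fin.eta] using Nat.add_right_cancel this
  · funext j
    have hj : d < d+1+(j:ℕ) := by omega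
    have hj2 : (d+1+(j:ℕ)) - (d+1) < n - d := by have := j.isLt; omega
    have := congrFun h ⟨d+1+(j:ℕ), by have := j.isLt; omega⟩
    rw [glueF, glueF] at this
    simp only at this
    rw [glue_gt α β hj hj2, glue_gt α' β' hj hj2] at this
    have he : (⟨(d+1+(j:ℕ)) - (d+1), hj2⟩ : Fin (n-d)) = j := by
      apply Fin.ext; show d+1+(j:ℕ) - (d+1) = (j:ℕ); omega
    rwa [he] at this

lemma glueF_ne {n d d' : ℕ} (hdd : d < d') (hd' : d' ≤ n)
    {α : Fin d → ℕ} {β : Fin (n-d) → ℕ} {α' : Fin d' → ℕ} {β' : Fin (n-d') → ℕ}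
    (hα' : α' ∈ stairSet d') :
    glueF n d α β ≠ glueF n d' α' β' := by
  intro h
  have hb := (mem_stairSet.1 hα').2 ⟨d, hdd⟩
  have := congrFun h ⟨d, by omega⟩
  rw [glueF, glueF] at this
  simp only at this
  rw [glue_eq, glue_lt α' β' hdd] at this
  simp only at hb
  omega


lemma stairSet_eq_biUnion (n : ℕ) :
    stairSet (n+1) =
      (range (n+1)).biUnion
        (fun d => ((stairSet d) ×ˢ (stairSet (n-d))).image (fun p => glueF n d p.1 p.2)) := by
  ext π
  simp only [Finset.mem_biUnion, Finset.mem_image, Finset.mem_range, Finset.mem_product]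
  constructor
  · intro hπ
    obtain ⟨d, hd, α, hα, β, hβ, rfl⟩ := exists_glue hπ
    exact ⟨d, by omega, ⟨α, β⟩, ⟨hα, hβ⟩, rfl⟩
  · rintro ⟨d, hd, ⟨α, β⟩, ⟨hα, hβ⟩, rfl⟩
    exact glueF_mem (by omega) hα hβ

lemma stair_decomp {M : Type} [AddCommMonoid M] (n : ℕ) (f : (Fin (n+1) → ℕ) → M) :
    ∑ π ∈ stairSet (n+1), f π
      = ∑ d ∈ range (n+1), ∑ p ∈ (stairSet d) ×ˢ (stairSet (n-d)), f (glueF n d p.1 p.2) := by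
  rw [stairSet_eq_biUnion n, Finset.sum_biUnion]
  · refine Finset.sum_congr rfl fun d hd => ?_
    rw [Finset.sum_image]
    rintro ⟨α, β⟩ hp ⟨α', β'⟩ hp' h
    have hdn : d ≤ n := by simp at hd; omega
    obtain ⟨h1, h2⟩ := glueF_inj hdn h
    exact Prod.ext h1 h2
  · intro d hd d' hd' hne
    simp only [Finset.coe_range, Set.mem_Iio] at hd hd'
    apply Finset.disjoint_left.2
    rintro π hπ hπ'
    simp only [Finset.mem_image, Finset.mem_product] at hπ hπ'
    obtain ⟨⟨α, β⟩, ⟨hα, hβ⟩, rfl⟩ := hπ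
    obtain ⟨⟨α', β'⟩, ⟨hα', hβ'⟩, heq⟩ := hπ'
    rcases lt_or_gt_of_ne hne with h | h
    · exact glueF_ne h (by omega) hα' heq.symm
    · exact glueF_ne h (by omega) hα heq

lemma glue_sum (n d : ℕ) (hd : d ≤ n) (α : Fin d → ℕ) (β : Fin (n-d) → ℕ) :
    ∑ i, glueF n d α β i = (∑ i, α i) + (∑ j, β j) + (d+1)*(n-d) := by
  have h0 : ∑ i, glueF n d α β i = ∑ m ∈ range (n+1), glue n d α β m :=
    Fin.sum_univ_eq_sum_range (glue n d α β) (n+1)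
  have e1 : ∑ m ∈ range d, glue n d α β m = (∑ i, α i) + d * (n-d) := by
    have hc : ∀ m ∈ range d, glue n d α β m = (if h : m < d then α ⟨m, h⟩ else 0) + (n-d) := by
      intro m hm
      have hm' : m < d := Finset.mem_range.1 hm
      rw [glue_lt α β hm', dif_pos hm']
    rw [Finset.sum_congr rfl hc, Finset.sum_add_distrib, Finset.sum_const, Finset.card_range,
      smul_eq_mul]
    congr 1
    rw [← Fin.sum_univ_eq_sum_range (fun m => if h : m < d then α ⟨m, h⟩ else 0) d]
    refine Finset.sum_congr rfl fun i _ => ?_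
    rw [dif_pos i.isLt]
  have e2 : glue n d α β d = n - d := glue_eq α β
  have e3 : ∑ m ∈ range (n+1-(d+1)), glue n d α β (d+1+m) = ∑ j, β j := by
    have hnd : n+1-(d+1) = n - d := by omega
    rw [hnd]
    rw [← Fin.sum_univ_eq_sum_range (fun m => glue n d α β (d+1+m)) (n-d)]
    refine Finset.sum_congr rfl fun j _ => ?_
    have hj2 : (d+1+(j:ℕ)) - (d+1) < n - d := by have := j.isLt; omega
    rw [glue_gt α β (by omega) hj2]
    congr 1
    apply Fin.ext
    show d+1+(j:ℕ) - (d+1) = (j:ℕ)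
    omega
  rw [h0, Finset.range_eq_Ico,
    ← Finset.sum_Ico_consecutive _ (Nat.zero_le d) (by omega : d ≤ n+1),
    Finset.sum_eq_sum_Ico_succ_bot (by omega : d < n+1), e2,
    Finset.sum_Ico_eq_sum_range, Finset.sum_Ico_eq_sum_range]
  simp only [Nat.sub_zero, Nat.zero_add]
  rw [e1, e3]
  ring

lemma cnt_rec (n : ℕ) :
    cnt (n+1) = ∑ d ∈ range (n+1), cnt d * cnt (n-d) := by
  have h := stair_decomp n (fun _ => (1 : ℕ))
  simp only [Finset.sum_const, smul_eq_mul, mul_one] at h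
  rw [cnt, h]
  refine Finset.sum_congr rfl fun d _ => ?_
  rw [Finset.card_product]
  rfl

lemma ar_rec (n : ℕ) :
    ar (n+1) = ∑ d ∈ range (n+1),
      (ar d * cnt (n-d) + cnt d * ar (n-d) + (d+1)*(n-d)*(cnt d * cnt (n-d))) := by
  rw [ar, stair_decomp n (fun π => ∑ i, π i)]
  refine Finset.sum_congr rfl fun d hd => ?_
  have hdn : d ≤ n := by simp at hd; omega
  have : ∀ p ∈ (stairSet d) ×ˢ (stairSet (n-d)),
      ∑ i, glueF n d p.1 p.2 i = (∑ i, p.1 i) + (∑ j, p.2 j) + (d+1)*(n-d) := by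
    rintro ⟨α, β⟩ _
    exact glue_sum n d hdn α β
  rw [Finset.sum_congr rfl this, Finset.sum_product]
  simp only [Finset.sum_add_distrib, Finset.sum_const, smul_eq_mul]
  rw [ar, ar, cnt, cnt]
  rw [← Finset.mul_sum]
  ring


lemma stairSet_zero : stairSet 0 = {fun i => i.elim0} := by
  ext π
  simp only [Finset.mem_singleton]
  constructor
  · intro _; funext i; exact i.elim0
  · intro h
    refine mem_stairSet.2 ⟨fun i => i.elim0, fun i => i.elim0⟩

lemma cnt_zero : cnt 0 = 1 := by rw [cnt, stairSet_zero]; simp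

lemma ar_zero : ar 0 = 0 := by rw [ar, stairSet_zero]; simp

lemma cnt_eq_catalan (k : ℕ) : cnt k = catalan k := by
  induction k using Nat.strong_induction_on with
  | _ k ih =>
    match k with
    | 0 => simpa [cnt_zero] using (catalan_zero).symm
    | (n+1) =>
      rw [cnt_rec n, catalan_succ n]
      rw [← Fin.sum_univ_eq_sum_range (fun d => cnt d * cnt (n-d)) (n+1)]
      refine Finset.sum_congr rfl fun d _ => ?_
      rw [ih d (by omega), ih (n - (d:ℕ)) (by omega)]

/-- transfer from the finsum definition -/
lemma stairBoxCount_eq_ar (k : ℕ) :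
    (∑ᶠ π : {π : Fin k → ℕ //
      (∀ i j, i ≤ j → π j ≤ π i) ∧ ∀ i : Fin k, π i ≤ k - ((i : ℕ) + 1)},
      ((∑ i, (π : Fin k → ℕ) i : ℕ) : ℚ)) = (ar k : ℚ) := by
  classical
  set p : (Fin k → ℕ) → Prop :=
    fun π => (∀ i j, i ≤ j → π j ≤ π i) ∧ ∀ i : Fin k, π i ≤ k - ((i : ℕ) + 1) with hp
  have hfin : Finite {π : Fin k → ℕ // p π} := by
    refine Finite.of_injective
      (fun π => (fun i => (⟨π.1 i, by have := π.2.2 i; omega⟩ : Fin (k+1)))) ?_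
    intro π π' h
    apply Subtype.ext
    funext i
    have := congrFun h i
    exact congrArg Fin.val this
  letI : Fintype {π : Fin k → ℕ // p π} := Fintype.ofFinite _
  rw [finsum_eq_sum_of_fintype]
  rw [ar, Nat.cast_sum, Finset.sum_subtype (stairSet k) (fun π => mem_stairSet)
    (fun π => ((∑ i, π i : ℕ) : ℚ))]



lemma ar_rec' (n : ℕ) :
    ar (n+1) = ∑ d ∈ range (n+1),
      (ar d * catalan (n-d) + catalan d * ar (n-d) + (d+1)*(n-d)*(catalan d * catalan (n-d))) := by
  rw [ar_rec]
  exact Finset.sum_congr rfl fun d _ => by rw [cnt_eq_catalan, cnt_eq_catalan]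

noncomputable def evenify (g : ℕ → ℚ) : PowerSeries ℚ :=
  PowerSeries.mk fun n => if n % 2 = 0 then g (n/2) else 0

lemma coeff_evenify (g : ℕ → ℚ) (n : ℕ) :
    PowerSeries.coeff (R := ℚ) n (evenify g) = if n % 2 = 0 then g (n/2) else 0 :=
  PowerSeries.coeff_mk _ _

lemma coeff_evenify_even (g : ℕ → ℚ) (t : ℕ) :
    PowerSeries.coeff (R := ℚ) (2*t) (evenify g) = g t := by
  rw [coeff_evenify]
  have h1 : (2*t) % 2 = 0 := by omega
  have h2 : (2*t) / 2 = t := by omega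
  rw [if_pos h1, h2]

lemma sum_range_even {M : Type} [AddCommMonoid M] (t : ℕ) (h : ℕ → M)
    (hodd : ∀ m, m % 2 = 1 → h m = 0) :
    ∑ m ∈ range (2*t+1), h m = ∑ a ∈ range (t+1), h (2*a) := by
  rw [← Finset.sum_filter_add_sum_filter_not (range (2*t+1)) (fun m => m % 2 = 0) h]
  have h2 : ∑ m ∈ (range (2*t+1)).filter (fun m => ¬ m % 2 = 0), h m = 0 :=
    Finset.sum_eq_zero (fun m hm => hodd m (by simp at hm; omega))
  have h1 : (range (2*t+1)).filter (fun m => m % 2 = 0) = (range (t+1)).image (fun a => 2*a) := by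
    ext m
    simp only [Finset.mem_filter, Finset.mem_image, Finset.mem_range]
    constructor
    · rintro ⟨hm, he⟩; exact ⟨m/2, by omega, by omega⟩
    · rintro ⟨a, ha, rfl⟩; omega
  rw [h2, add_zero, h1, Finset.sum_image (by intro a _ b _ hab; simp only at hab; omega)]

lemma evenify_mul (g h : ℕ → ℚ) :
    evenify g * evenify h = evenify (fun t => ∑ i ∈ range (t+1), g i * h (t - i)) := by
  ext n
  rw [PowerSeries.coeff_mul, coeff_evenify,
    Finset.Nat.sum_antidiagonal_eq_sum_range_succ
      (fun i j => PowerSeries.coeff (R := ℚ) i (evenify g) * PowerSeries.coeff (R := ℚ) j (evenify h)) n]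
  rcases Nat.mod_two_eq_zero_or_one n with hn | hn
  · obtain ⟨t, rfl⟩ : ∃ t, n = 2*t := ⟨n/2, by omega⟩
    rw [if_pos hn]
    have h2 : (2*t)/2 = t := by omega
    rw [h2]
    rw [sum_range_even t _ (fun m hm => by
      rw [coeff_evenify, if_neg (by omega)]; ring)]
    refine Finset.sum_congr rfl fun a ha => ?_
    have ha' : a ≤ t := by simp at ha; omega
    have e1 : 2*t - 2*a = 2*(t-a) := by omega
    rw [coeff_evenify_even, e1, coeff_evenify_even]
  · rw [if_neg (by omega)]
    refine Finset.sum_eq_zero fun m hm => ?_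
    have hmn : m ≤ n := by simp at hm; omega
    rcases Nat.mod_two_eq_zero_or_one m with hme | hme
    · rw [coeff_evenify h (n - m), if_neg (by omega)]; ring
    · rw [coeff_evenify g m, if_neg (by omega)]; ring

lemma evenify_add (g h : ℕ → ℚ) :
    evenify g + evenify h = evenify (fun t => g t + h t) := by
  ext n
  rw [map_add, coeff_evenify, coeff_evenify, coeff_evenify]
  split_ifs <;> simp

lemma evenify_sub (g h : ℕ → ℚ) :
    evenify g - evenify h = evenify (fun t => g t - h t) := by
  ext n
  rw [map_sub, coeff_evenify, coeff_evenify, coeff_evenify]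
  split_ifs <;> simp

lemma one_eq_evenify : (1 : PowerSeries ℚ) = evenify (fun t => if t = 0 then 1 else 0) := by
  ext n
  rw [PowerSeries.coeff_one, coeff_evenify]
  rcases Nat.mod_two_eq_zero_or_one n with hn | hn
  · rw [if_pos hn]
    by_cases h0 : n = 0
    · subst h0; simp
    · rw [if_neg h0, if_neg (by omega)]
  · rw [if_neg (by omega), if_neg (by omega)]

lemma X2_eq_evenify : (PowerSeries.X^2 : PowerSeries ℚ) = evenify (fun t => if t = 1 then 1 else 0) := by
  ext n
  rw [PowerSeries.coeff_X_pow, coeff_evenify]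
  rcases Nat.mod_two_eq_zero_or_one n with hn | hn
  · rw [if_pos hn]
    by_cases h2 : n = 2
    · subst h2; norm_num
    · rw [if_neg h2, if_neg (by omega)]
  · rw [if_neg (by omega), if_neg (by omega)]

lemma shift_evenify (g : ℕ → ℚ) :
    (PowerSeries.X^2 : PowerSeries ℚ) * evenify g
      = evenify (fun t => if t = 0 then 0 else g (t-1)) := by
  rw [X2_eq_evenify, evenify_mul]
  have hfun : (fun t => ∑ i ∈ range (t+1), (if i = 1 then (1:ℚ) else 0) * g (t-i))
      = fun t => if t = 0 then 0 else g (t-1) := by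
    funext t
    match t with
    | 0 => simp
    | (s+1) =>
      rw [if_neg (by omega)]
      rw [Finset.sum_eq_single 1 (fun b _ hb => by rw [if_neg hb]; ring)
        (fun hmem => by simp at hmem)]
      rw [if_pos rfl]
      simp
  rw [hfun]


noncomputable def cseq (t : ℕ) : ℚ := (catalan t : ℚ)
noncomputable def vseq (t : ℕ) : ℚ := if t = 0 then 1 else -cseq (t-1)
noncomputable def wseq (t : ℕ) : ℚ := if t = 0 then 1 else -2*cseq (t-1)
noncomputable def d1seq (t : ℕ) : ℚ := ((t:ℚ)+1) * cseq t
noncomputable def d2seq (t : ℕ) : ℚ := (t:ℚ) * cseq t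
noncomputable def fseq (t : ℕ) : ℚ := (ar t : ℚ)

/-- catalan recurrence in range form, over ℚ -/
lemma catalan_rec_range (s : ℕ) :
    cseq (s+1) = ∑ i ∈ range (s+1), cseq i * cseq (s-i) := by
  rw [cseq, catalan_succ' s,
    Finset.Nat.sum_antidiagonal_eq_sum_range_succ (fun i j => catalan i * catalan j) s]
  push_cast
  simp only [cseq]

/-- symmetric weighted sum -/
lemma weighted_sym (s : ℕ) :
    2 * (∑ i ∈ range (s+1), ((s:ℚ)-(i:ℚ)) * (cseq i * cseq (s-i)))
      = (s:ℚ) * cseq (s+1) := by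
  have hrefl : ∑ i ∈ range (s+1), ((s:ℚ)-(i:ℚ)) * (cseq i * cseq (s-i))
      = ∑ i ∈ range (s+1), (i:ℚ) * (cseq i * cseq (s-i)) := by
    rw [← Finset.sum_range_reflect (fun i => ((s:ℚ)-(i:ℚ)) * (cseq i * cseq (s-i))) (s+1)]
    refine Finset.sum_congr rfl fun j hj => ?_
    have hjs : j ≤ s := by simp at hj; omega
    have e1 : s + 1 - 1 - j = s - j := by omega
    have e2 : s - (s - j) = j := by omega
    rw [e1, e2]
    have e3 : ((s:ℚ) - ((s-j:ℕ):ℚ)) = (j:ℚ) := by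
      have : ((s-j:ℕ):ℚ) = (s:ℚ) - (j:ℚ) := by push_cast [hjs]; ring
      rw [this]; ring
    rw [e3]
    ring
  have hsum : (∑ i ∈ range (s+1), ((s:ℚ)-(i:ℚ)) * (cseq i * cseq (s-i)))
      + (∑ i ∈ range (s+1), (i:ℚ) * (cseq i * cseq (s-i)))
      = (s:ℚ) * cseq (s+1) := by
    rw [← Finset.sum_add_distrib, catalan_rec_range s, Finset.mul_sum]
    refine Finset.sum_congr rfl fun i _ => ?_
    ring
  rw [two_mul]
  nth_rewrite 2 [hrefl]
  exact hsum

lemma id1 (t : ℕ) :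
    ∑ i ∈ range (t+1), cseq i * vseq (t-i) = (if t = 0 then 1 else 0) := by
  match t with
  | 0 => simp [cseq, vseq]
  | (s+1) =>
    rw [if_neg (by omega), Finset.sum_range_succ]
    have e0 : s + 1 - (s+1) = 0 := by omega
    rw [e0]
    have hc : ∀ i ∈ range (s+1), cseq i * vseq (s+1-i) = -(cseq i * cseq (s-i)) := by
      intro i hi
      have his : i ≤ s := by simp at hi; omega
      rw [vseq, if_neg (by omega)]
      have : s + 1 - i - 1 = s - i := by omega
      rw [this]
      ring
    rw [Finset.sum_congr rfl hc, Finset.sum_neg_distrib, vseq, if_pos rfl]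
    rw [← catalan_rec_range s]
    ring

lemma id2 (t : ℕ) :
    ∑ i ∈ range (t+1), wseq i * d1seq (t-i) = (if t = 0 then 1 else 0) := by
  match t with
  | 0 => simp [wseq, d1seq, cseq]
  | (s+1) =>
    rw [if_neg (by omega), Finset.sum_range_succ']
    have hc : ∀ i ∈ range (s+1), wseq (i+1) * d1seq (s+1-(i+1))
        = -2 * ((((s-i:ℕ):ℚ)+1) * (cseq i * cseq (s-i))) := by
      intro i hi
      rw [wseq, if_neg (by omega)]
      have e1 : i + 1 - 1 = i := by omega
      have e2 : s + 1 - (i+1) = s - i := by omega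
      rw [e1, e2, d1seq]
      ring
    rw [Finset.sum_congr rfl hc]
    rw [wseq, if_pos rfl, d1seq]
    have key : ∑ i ∈ range (s+1), (-2 : ℚ) * ((((s-i:ℕ):ℚ)+1) * (cseq i * cseq (s-i)))
        = -(((s:ℚ)+2) * cseq (s+1)) := by
      have expand : ∀ i ∈ range (s+1), (-2 : ℚ) * ((((s-i:ℕ):ℚ)+1) * (cseq i * cseq (s-i)))
          = -2*(((s:ℚ)-(i:ℚ)) * (cseq i * cseq (s-i))) + (-2)*(cseq i * cseq (s-i)) := by
        intro i hi
        have his : i ≤ s := by simp at hi; omega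
        have : ((s-i:ℕ):ℚ) = (s:ℚ) - (i:ℚ) := by push_cast [his]; ring
        rw [this]
        ring
      rw [Finset.sum_congr rfl expand, Finset.sum_add_distrib]
      rw [← Finset.mul_sum, ← Finset.mul_sum]
      have h1 : (∑ i ∈ range (s+1), ((s:ℚ)-(i:ℚ)) * (cseq i * cseq (s-i)))
          = (s:ℚ) * cseq (s+1) / 2 := by
        have := weighted_sym s
        linarith
      rw [h1, ← catalan_rec_range s]
      ring
    rw [key, Nat.sub_zero]
    push_cast
    ring

lemma id3 (t : ℕ) :
    ∑ i ∈ range (t+1), wseq i * d2seq (t-i) = cseq t - (if t = 0 then 1 else 0) := by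
  match t with
  | 0 => simp [wseq, d2seq, cseq]
  | (s+1) =>
    rw [if_neg (by omega), Finset.sum_range_succ']
    have hc : ∀ i ∈ range (s+1), wseq (i+1) * d2seq (s+1-(i+1))
        = -2 * (((s:ℚ)-(i:ℚ)) * (cseq i * cseq (s-i))) := by
      intro i hi
      have his : i ≤ s := by simp at hi; omega
      rw [wseq, if_neg (by omega)]
      have e1 : i + 1 - 1 = i := by omega
      have e2 : s + 1 - (i+1) = s - i := by omega
      rw [e1, e2, d2seq]
      have : ((s-i:ℕ):ℚ) = (s:ℚ) - (i:ℚ) := by push_cast [his]; ring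
      rw [this]
      ring
    rw [Finset.sum_congr rfl hc, wseq, if_pos rfl, d2seq, Nat.sub_zero]
    rw [← Finset.mul_sum]
    have h1 : (∑ i ∈ range (s+1), ((s:ℚ)-(i:ℚ)) * (cseq i * cseq (s-i)))
        = (s:ℚ) * cseq (s+1) / 2 := by
      have := weighted_sym s
      linarith
    rw [h1]
    push_cast
    ring

lemma id6 (t : ℕ) :
    ∑ i ∈ range (t+1), fseq i * wseq (t-i)
      = (if t = 0 then 0 else ∑ i ∈ range ((t-1)+1), d1seq i * d2seq ((t-1) - i)) := by
  match t with
  | 0 => simp [fseq, wseq, ar_zero]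
  | (s+1) =>
    rw [if_neg (by omega)]
    have e0 : s + 1 - 1 = s := by omega
    rw [e0, Finset.sum_range_succ]
    have e1 : s + 1 - (s+1) = 0 := by omega
    rw [e1, wseq, if_pos rfl, mul_one]
    have hc : ∀ i ∈ range (s+1), fseq i * wseq (s+1-i) = -2 * (fseq i * cseq (s-i)) := by
      intro i hi
      have his : i ≤ s := by simp at hi; omega
      rw [wseq, if_neg (by omega)]
      have : s + 1 - i - 1 = s - i := by omega
      rw [this]
      ring
    rw [Finset.sum_congr rfl hc]
    -- use the combinatorial recurrence
    have hrec : fseq (s+1) = 2 * (∑ i ∈ range (s+1), fseq i * cseq (s-i))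
        + ∑ i ∈ range (s+1), d1seq i * d2seq (s-i) := by
      have h := ar_rec' s
      have hcast : (ar (s+1) : ℚ) = ∑ d ∈ range (s+1),
          ((ar d : ℚ) * cseq (s-d) + cseq d * (ar (s-d) : ℚ)
            + ((d:ℚ)+1)*((s-d:ℕ):ℚ)*(cseq d * cseq (s-d))) := by
        rw [h]
        push_cast
        refine Finset.sum_congr rfl fun d _ => ?_
        simp only [cseq]
        try ring
      have hswap : ∑ d ∈ range (s+1), cseq d * (ar (s-d) : ℚ)
          = ∑ d ∈ range (s+1), (ar d : ℚ) * cseq (s-d) := by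
        rw [← Finset.sum_range_reflect (fun d => cseq d * (ar (s-d) : ℚ)) (s+1)]
        refine Finset.sum_congr rfl fun j hj => ?_
        have hjs : j ≤ s := by simp at hj; omega
        have e2 : s + 1 - 1 - j = s - j := by omega
        have e3 : s - (s - j) = j := by omega
        rw [e2, e3]
        ring
      show (ar (s+1) : ℚ) = _
      rw [hcast, Finset.sum_add_distrib, Finset.sum_add_distrib, hswap]
      have hterm : ∀ d ∈ range (s+1), ((d:ℚ)+1)*((s-d:ℕ):ℚ)*(cseq d * cseq (s-d))
          = d1seq d * d2seq (s-d) := by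
        intro d _
        rw [d1seq, d2seq]
        ring
      rw [Finset.sum_congr rfl hterm]
      simp only [fseq]
      ring
    have hneg : ∑ i ∈ range (s+1), (-2:ℚ) * (fseq i * cseq (s-i))
        = -2 * ∑ i ∈ range (s+1), fseq i * cseq (s-i) := by rw [← Finset.mul_sum]
    rw [hneg, hrec]
    ring


lemma catalanX2_eq : catalanX2 = evenify cseq := by
  ext n
  rw [catalanX2, PowerSeries.coeff_mk, coeff_evenify]
  rcases Nat.mod_two_eq_zero_or_one n with hn | hn
  · rw [if_pos hn, if_pos hn]
    have hcb : Nat.choose n (n/2) = Nat.centralBinom (n/2) := by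
      rw [Nat.centralBinom]
      congr 1
      omega
    obtain ⟨t, rfl⟩ : ∃ t, n = 2*t := ⟨n/2, by omega⟩
    have ht : (2*t)/2 = t := by omega
    rw [hcb, cseq, ht]
    have hq : ((2*t : ℕ) : ℚ)/2 = (t : ℚ) := by push_cast; ring
    rw [hq]
    have h := succ_mul_catalan_eq_centralBinom t
    have hne : (t : ℚ) + 1 ≠ 0 := by positivity
    rw [div_eq_iff hne]
    exact_mod_cast (by rw [← h]; ring)
  · rw [if_neg (by omega), if_neg (by omega)]


lemma hV : (1 : PowerSeries ℚ) - PowerSeries.X^2*catalanX2 = evenify vseq := by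
  rw [catalanX2_eq, shift_evenify, one_eq_evenify, evenify_sub]
  refine congrArg evenify (funext fun t => ?_)
  match t with
  | 0 => simp [vseq]
  | (s+1) => simp only [vseq]; norm_num

lemma hW : (1 : PowerSeries ℚ) - 2*(PowerSeries.X^2*catalanX2) = evenify wseq := by
  have h2 : 2*((PowerSeries.X^2 : PowerSeries ℚ)*catalanX2)
      = evenify (fun t => (if t = 0 then 0 else cseq (t-1)) + (if t = 0 then 0 else cseq (t-1))) := by
    rw [two_mul, catalanX2_eq, shift_evenify, evenify_add]
  rw [h2, one_eq_evenify, evenify_sub]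
  refine congrArg evenify (funext fun t => ?_)
  match t with
  | 0 => simp [wseq]
  | (s+1) => simp only [wseq]; norm_num; ring

lemma s1 : catalanX2 * ((1 : PowerSeries ℚ) - PowerSeries.X^2*catalanX2) = 1 := by
  rw [hV, catalanX2_eq, evenify_mul, one_eq_evenify]
  exact congrArg evenify (funext id1)

lemma s2 : ((1 : PowerSeries ℚ) - 2*(PowerSeries.X^2*catalanX2)) * evenify d1seq = 1 := by
  rw [hW, evenify_mul, one_eq_evenify]
  exact congrArg evenify (funext id2)

lemma s3 : ((1 : PowerSeries ℚ) - 2*(PowerSeries.X^2*catalanX2)) * evenify d2seq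
    = catalanX2 - 1 := by
  rw [hW, evenify_mul, catalanX2_eq, one_eq_evenify, evenify_sub]
  exact congrArg evenify (funext id3)

lemma s6 : evenify fseq * ((1 : PowerSeries ℚ) - 2*(PowerSeries.X^2*catalanX2))
    = PowerSeries.X^2 * (evenify d1seq * evenify d2seq) := by
  rw [hW, evenify_mul, evenify_mul, shift_evenify]
  exact congrArg evenify (funext id6)

lemma constC : PowerSeries.constantCoeff (R := ℚ) catalanX2 = 1 := by
  have h := coeff_evenify_even cseq 0
  rw [← catalanX2_eq] at h
  simpa [cseq] using h

lemma constW : PowerSeries.constantCoeff (R := ℚ)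
    ((1 : PowerSeries ℚ) - 2*(PowerSeries.X^2*catalanX2)) = 1 := by
  simp [map_sub, map_mul, map_pow, PowerSeries.constantCoeff_X]

lemma hWne : ((1 : PowerSeries ℚ) - 2*(PowerSeries.X^2*catalanX2)) ≠ 0 := by
  intro h
  have := constW
  rw [h] at this
  simp at this

lemma hinv : (2 - catalanX2)⁻¹
    = ((1 : PowerSeries ℚ) - PowerSeries.X^2*catalanX2) * evenify d1seq := by
  have hcc : PowerSeries.constantCoeff (R := ℚ) (2 - catalanX2) ≠ 0 := by
    rw [map_sub, constC]
    norm_num [map_ofNat]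
  rw [PowerSeries.inv_eq_iff_mul_eq_one hcc]
  have h2C : 2 - catalanX2
      = ((1 : PowerSeries ℚ) - 2*(PowerSeries.X^2*catalanX2)) * catalanX2 := by
    linear_combination (-2 : PowerSeries ℚ) * s1
  rw [h2C]
  linear_combination (((1 : PowerSeries ℚ) - 2*(PowerSeries.X^2*catalanX2)) * evenify d1seq) * s1
    + s2

lemma hF : evenify fseq
    = catalanX2 * (catalanX2 - 1)^2 * ((2 - catalanX2)⁻¹)^3 := by
  set C := catalanX2
  set V := (1 : PowerSeries ℚ) - PowerSeries.X^2*C with hVdef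
  set W := (1 : PowerSeries ℚ) - 2*(PowerSeries.X^2*C) with hWdef
  set D1 := evenify d1seq
  set D2 := evenify d2seq
  have e1 : C - 1 = PowerSeries.X^2*(C*C) := by linear_combination s1
  have e4 : (C - 1)*V = PowerSeries.X^2*C := by linear_combination s1
  have e2 : evenify fseq * W^3 = PowerSeries.X^2*(C-1) := by
    calc evenify fseq * W^3 = (evenify fseq * W)*W^2 := by ring
    _ = (PowerSeries.X^2 * (D1*D2))*W^2 := by rw [s6]
    _ = (PowerSeries.X^2)*(W*D1)*(W*D2) := by ring
    _ = (PowerSeries.X^2)*1*(C-1) := by rw [s2, s3]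
    _ = PowerSeries.X^2*(C-1) := by ring
  have e3 : (C*(C-1)^2*(V*D1)^3)*W^3 = PowerSeries.X^2*(C-1) := by
    calc (C*(C-1)^2*(V*D1)^3)*W^3 = (C*V)*((C-1)*V)^2*(W*D1)^3 := by ring
    _ = (C*V)*((C-1)*V)^2*1^3 := by rw [s2]
    _ = 1*(PowerSeries.X^2*C)^2*1^3 := by rw [s1, e4]
    _ = PowerSeries.X^2*(PowerSeries.X^2*(C*C)) := by ring
    _ = PowerSeries.X^2*(C-1) := by rw [← e1]
  rw [hinv]
  exact mul_right_cancel₀ (pow_ne_zero 3 hWne) (e2.trans e3.symm)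


end StairAux

/-- For each `k`, `Σ_{π ⊆ staircase(k)} |π|` equals the coefficient of `x^{2k}` in
`c(c−1)²/(2−c)³` with `c = c(x²)`. -/
theorem stairBoxCount_eq_coeff (k : ℕ) :
    stairBoxCount k =
      PowerSeries.coeff (R := ℚ) (2 * k)
        (catalanX2 * (catalanX2 - 1) ^ 2 * ((2 - catalanX2)⁻¹) ^ 3) := by
  have h0 : stairBoxCount k = (StairAux.ar k : ℚ) := StairAux.stairBoxCount_eq_ar k
  rw [h0, ← StairAux.hF, StairAux.coeff_evenify_even]
  simp [StairAux.fseq]
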